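/- Let λ > 0 be a real number and set δ = √(λ/2). Then the function u : ℝ × ℝ → ℝ defined by u(x,t) = -(1/2)(1 + tanh((δ/2)·x + (3λ/4)·t)) satisfies the Chaffee–Infante equation ∂u/∂t - ∂²u/∂x² + λ(u³ - u) = 0 at every point (x,t) ∈ ℝ². -/

import Mathlib

lemma hasDerivAt_tanh (x : ℝ) :
    HasDerivAt Real.tanh (1 - Real.tanh x ^ 2) x := by
  have hc : Real.cosh x ≠ 0 := (Real.cosh_pos x).ne'
  have h := (Real.hasDerivAt_sinh x).div (Real.hasDerivAt_cosh x) hc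
  have heq : (Real.cosh x * Real.cosh x - Real.sinh x * Real.sinh x) / Real.cosh x ^ 2
      = 1 - Real.tanh x ^ 2 := by
    rw [Real.tanh_eq_sinh_div_cosh]
    have := Real.cosh_sq_sub_sinh_sq x
    field_simp
  rw [heq] at h
  have hf : Real.sinh / Real.cosh = Real.tanh := by
    funext y; simp [Real.tanh_eq_sinh_div_cosh]
  rw [hf] at h
  exact h

lemma hasDerivAt_tanh_affine (a b c : ℝ) (s : ℝ) :
    HasDerivAt (fun y : ℝ => Real.tanh (a * y + b))
      (a * (1 - Real.tanh (a * s + b) ^ 2)) s := by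
  have h1 : HasDerivAt (fun y : ℝ => a * y + b) a s := by
    simpa using ((hasDerivAt_id s).const_mul a).add_const b
  simpa [mul_comm, Function.comp_def] using (hasDerivAt_tanh (a * s + b)).comp s h1

/-- The known soliton solution `u(x,t) = -(1/2)(1 + tanh((δ/2)x + (3λ/4)t))`,
with `δ = √(λ/2)`, satisfies the Chaffee–Infante equation
`∂u/∂t - ∂²u/∂x² + λ(u³ - u) = 0` at every point, for `λ > 0`. -/
theorem soliton_solves_chaffee_infante (lam : ℝ) (hlam : 0 < lam)
    (u : ℝ → ℝ → ℝ)
    (hu : ∀ x t : ℝ,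
      u x t = -(1/2) * (1 + Real.tanh ((Real.sqrt (lam/2) / 2) * x + (3*lam/4) * t))) :
    ∀ x t : ℝ,
      deriv (fun s => u x s) t - iteratedDeriv 2 (fun y => u y t) x
        + lam * ((u x t)^3 - u x t) = 0 := by
  intro x t
  set a : ℝ := Real.sqrt (lam/2) / 2 with ha
  set b : ℝ := 3*lam/4 with hb
  have ha2 : a ^ 2 = lam / 8 := by
    rw [ha, div_pow, Real.sq_sqrt (by linarith : (0:ℝ) ≤ lam/2)]
    ring
  set T : ℝ := Real.tanh (a * x + b * t) with hT
  -- time derivative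
  have hdt : deriv (fun s => u x s) t = -(1/2) * (b * (1 - T ^ 2)) := by
    have h1 : HasDerivAt (fun s : ℝ => u x s) (-(1/2) * (b * (1 - T ^ 2))) t := by
      have h2 : HasDerivAt (fun s : ℝ => Real.tanh (b * s + a * x)) (b * (1 - T ^ 2)) t := by
        have := hasDerivAt_tanh_affine b (a * x) 0 t
        simpa [hT, add_comm] using this
      have h3 := (h2.const_add 1).const_mul (-(1/2 : ℝ))
      have : (fun s : ℝ => u x s) = fun s => -(1/2) * (1 + Real.tanh (b * s + a * x)) := by
        funext s; rw [hu x s]; ring_nf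
      rw [this]
      exact h3
    exact h1.deriv
  -- space derivatives
  have hdx1 : (deriv (fun y => u y t)) = fun y =>
      -(1/2) * (a * (1 - Real.tanh (a * y + b * t) ^ 2)) := by
    funext y
    have h2 := hasDerivAt_tanh_affine a (b * t) 0 y
    have h3 := (h2.const_add 1).const_mul (-(1/2 : ℝ))
    have heq : (fun y : ℝ => u y t) = fun y => -(1/2) * (1 + Real.tanh (a * y + b * t)) := by
      funext y; rw [hu y t]
    rw [heq]
    exact h3.deriv
  have hdx2 : iteratedDeriv 2 (fun y => u y t) x = a ^ 2 * T * (1 - T ^ 2) := by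
    rw [show (2:ℕ) = 1 + 1 from rfl, iteratedDeriv_succ, iteratedDeriv_one, hdx1]
    have h2 : HasDerivAt (fun y : ℝ => Real.tanh (a * y + b * t))
        (a * (1 - Real.tanh (a * x + b * t) ^ 2)) x := hasDerivAt_tanh_affine a (b * t) 0 x
    have h4 : HasDerivAt (fun y : ℝ => -(1/2) * (a * (1 - Real.tanh (a * y + b * t) ^ 2)))
        (a ^ 2 * T * (1 - T ^ 2)) x := by
      have h5 : HasDerivAt (fun y : ℝ => Real.tanh (a * y + b * t) ^ 2)
          (2 * T * (a * (1 - T ^ 2))) x := by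
        simpa [hT, mul_comm, mul_assoc, pow_two, Pi.mul_def] using (h2.pow 2)
      have h6 := ((h5.const_mul (-1 : ℝ)).const_add 1).const_mul a |>.const_mul (-(1/2 : ℝ))
      have hfun : (fun y => -(1/2:ℝ) * (a * (1 - Real.tanh (a*y+b*t)^2)))
          = fun y => -(1/2:ℝ) * (a * (1 + -1 * Real.tanh (a*y+b*t)^2)) := by
        funext y; ring
      have hval : a^2*T*(1-T^2) = -(1/2)*(a*(-1*(2*T*(a*(1-T^2))))) := by ring
      rw [hfun, hval]; exact h6
    exact h4.deriv
  rw [hdt, hdx2, hu x t, ← hT]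
  have key : -(1/2) * (b * (1 - T ^ 2)) - a ^ 2 * T * (1 - T ^ 2)
      + lam * ((-(1/2) * (1 + T))^3 - -(1/2) * (1 + T)) = 0 := by
    rw [ha2, hb]; ring
  exact key
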